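/- Let M be a loopless connected matroid on ground set [q], let K be a maximal cone of the Bergman fan of M (with the nested set fan structure), and let w be in the relative interior of K. Set w_min = min over circuits C with non-constant w|_C of (max^1_{e∈C} w_e − max^2_{e∈C} w_e), where max^1 and max^2 denote the largest and second-largest distinct values. Then every u in the Bergman fan with d_tr(u, w) < w_min lies in the relative interior of K. -/

import Mathlib

/-- The tropical symmetric distance on `ℝ^q`. -/
noncomputable def dtr (q : ℕ) [NeZero q] (x y : Fin q → ℝ) : ℝ :=
  (Finset.univ.sup' Finset.univ_nonempty fun i => y i - x i) -
  (Finset.univ.inf' Finset.univ_nonempty fun i => y i - x i)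

/-- A circuit of a matroid: a minimal dependent set. -/
def IsCircuit {α : Type*} (M : Matroid α) (C : Set α) : Prop :=
  M.Dep C ∧ ∀ D ⊂ C, ¬ M.Dep D

/-- A loopless matroid: every singleton of the ground set is independent. -/
def Loopless {α : Type*} (M : Matroid α) : Prop :=
  ∀ a ∈ M.E, M.Indep {a}

/-- A connected matroid: any two distinct ground-set elements lie in a common circuit. -/
def Connected {α : Type*} (M : Matroid α) : Prop :=
  ∀ a ∈ M.E, ∀ b ∈ M.E, a ≠ b → ∃ C, IsCircuit M C ∧ a ∈ C ∧ b ∈ C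

/-- The set of elements of `C` at which `w` attains its maximum over `C`. -/
def argmaxOn {α : Type*} (C : Set α) (w : α → ℝ) : Set α :=
  {e ∈ C | ∀ f ∈ C, w f ≤ w e}

/-- Membership in the Bergman fan of a matroid `M`. -/
def InBergmanFan {α : Type*} (M : Matroid α) (w : α → ℝ) : Prop :=
  ∀ C, IsCircuit M C → (argmaxOn C w).Nontrivial

/-- The largest value of `w` on `C`. -/
noncomputable def max1 {α : Type*} (C : Set α) (w : α → ℝ) : ℝ := sSup (w '' C)

/-- The second-largest distinct value of `w` on `C`. -/
noncomputable def max2 {α : Type*} (C : Set α) (w : α → ℝ) : ℝ :=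
  sSup ((w '' C) \ {max1 C w})

/-- `w` is non-constant on `C`. -/
def NonconstOn {α : Type*} (C : Set α) (w : α → ℝ) : Prop :=
  ∃ a ∈ C, ∃ b ∈ C, w a ≠ w b

/-- `w_min`: the minimum, over circuits on which `w` is non-constant,
of the gap between the largest and second-largest values of `w` on the circuit. -/
noncomputable def wMin {α : Type*} (M : Matroid α) (w : α → ℝ) : ℝ :=
  sInf {d : ℝ | ∃ C, IsCircuit M C ∧ NonconstOn C w ∧ d = max1 C w - max2 C w}

theorem stmt9 (q : ℕ) [NeZero q] (M : Matroid (Fin q)) (hE : M.E = Set.univ)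
    (hloopless : Loopless M) (hconn : Connected M)
    (w : Fin q → ℝ) (hw : InBergmanFan M w)
    -- `w` lies in the relative interior of a *maximal* cone of the nested set fan:
    -- any fan point whose argmax sets are contained in those of `w` has the same argmax sets.
    (hmaxcone : ∀ u, InBergmanFan M u →
      (∀ C, IsCircuit M C → argmaxOn C u ⊆ argmaxOn C w) →
      ∀ C, IsCircuit M C → argmaxOn C u = argmaxOn C w) :
    ∀ u, InBergmanFan M u → dtr q u w < wMin M w →
      ∀ C, IsCircuit M C → argmaxOn C u = argmaxOn C w := by
  intro u hu hdist
  refine hmaxcone u hu ?_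
  intro C hC e he
  obtain ⟨heC, hemax⟩ := he
  refine ⟨heC, ?_⟩
  by_contra hcon
  push_neg at hcon
  obtain ⟨f, hfC, hfe⟩ := hcon
  have hCfin : C.Finite := Set.toFinite C
  have himfin : (w '' C).Finite := hCfin.image w
  -- g achieves the max of w on C
  obtain ⟨g, hgC, hgmax⟩ := Set.exists_max_image C w hCfin ⟨f, hfC⟩
  have hmax1 : max1 C w = w g := by
    apply le_antisymm
    · exact csSup_le ⟨w g, ⟨g, hgC, rfl⟩⟩ (by rintro x ⟨a, haC, rfl⟩; exact hgmax a haC)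
    · exact le_csSup himfin.bddAbove ⟨g, hgC, rfl⟩
  have hweg : w e < w g := lt_of_lt_of_le hfe (hgmax f hfC)
  have hwemax2 : w e ≤ max2 C w := by
    apply le_csSup ((Set.Finite.diff himfin : (w '' C \ {max1 C w}).Finite).bddAbove)
    exact ⟨⟨e, heC, rfl⟩, by simp [hmax1]; exact ne_of_lt hweg⟩
  have hwmin_le : wMin M w ≤ max1 C w - max2 C w := by
    have hS : ({d : ℝ | ∃ C, IsCircuit M C ∧ NonconstOn C w ∧ d = max1 C w - max2 C w}).Finite := by
      apply Set.Finite.subset (Set.finite_range fun D : Set (Fin q) => max1 D w - max2 D w)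
      rintro d ⟨D, _, _, rfl⟩; exact ⟨D, rfl⟩
    exact csInf_le hS.bddBelow ⟨C, hC, ⟨g, hgC, e, heC, ne_of_gt hweg⟩, rfl⟩
  have hdtr : w g - w e ≤ dtr q u w := by
    have h1 : w g - u g ≤ Finset.univ.sup' Finset.univ_nonempty fun i => w i - u i :=
      Finset.le_sup' (fun i => w i - u i) (Finset.mem_univ g)
    have h2 : (Finset.univ.inf' Finset.univ_nonempty fun i => w i - u i) ≤ w e - u e :=
      Finset.inf'_le (fun i => w i - u i) (Finset.mem_univ e)
    have h3 : u g ≤ u e := hemax g hgC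
    unfold dtr
    linarith
  have : max1 C w - max2 C w ≤ w g - w e := by rw [hmax1]; linarith
  linarith
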